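/- In the Cantor-type construction on a strictly concave C² arc satisfying the smallness hypothesis, the resulting compact set K = ⋂_{N≥0} closure(K_N) has positive one-dimensional Hausdorff measure: ℋ¹(K) > 0. -/

import Mathlib

noncomputable section
open MeasureTheory Filter Set Topology Metric
open scoped RealInnerProductSpace
open scoped NNReal ENNReal

section Aux

lemma prod_one_sub_ge' (n : ℕ) (x : ℕ → ℝ) (h0 : ∀ j, 0 ≤ x j) (h1 : ∀ j, x j ≤ 1) :
    1 - ∑ j ∈ Finset.range n, x j ≤ ∏ j ∈ Finset.range n, (1 - x j) := by
  induction n with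
  | zero => simp
  | succ n ih =>
    rw [Finset.sum_range_succ, Finset.prod_range_succ]
    have hp : (0:ℝ) ≤ ∏ j ∈ Finset.range n, (1 - x j) :=
      Finset.prod_nonneg fun j _ => by linarith [h1 j]
    have hs : (0:ℝ) ≤ ∑ j ∈ Finset.range n, x j := Finset.sum_nonneg fun j _ => h0 j
    nlinarith [h0 n, h1 n]

lemma sum_range_two_mul' (f : ℕ → ℝ) (n : ℕ) :
    ∑ i ∈ Finset.range (2 * n), f i = ∑ k ∈ Finset.range n, (f (2 * k) + f (2 * k + 1)) := by
  induction n with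
  | zero => simp
  | succ n ih =>
    rw [Finset.sum_range_succ, ← ih, Nat.mul_succ]
    rw [Finset.sum_range_succ, Finset.sum_range_succ]
    ring_nf

lemma geom_sum_le_div' (R : ℝ) (h0 : 0 ≤ R) (h1 : R < 1) (n : ℕ) :
    ∑ j ∈ Finset.range n, R ^ j ≤ 1 / (1 - R) := by
  have hR : (0:ℝ) < 1 - R := by linarith
  induction n with
  | zero => simpa using le_of_lt (div_pos one_pos hR)
  | succ n ih =>
    rw [geom_sum_succ]
    have h2 : R * ∑ j ∈ Finset.range n, R ^ j ≤ R * (1/(1-R)) := mul_le_mul_of_nonneg_left ih h0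
    have hid : R * (1/(1-R)) + 1 = 1/(1-R) := by field_simp; ring
    linarith

set_option maxHeartbeats 1000000 in
lemma node_est (len D L x y d1 d2 m : ℝ)
    (hlen : 0 < len) (hm : 0 ≤ m) (hm2 : m ^ 2 ≤ 1 / 32)
    (hL0 : 0 ≤ L) (hL2 : L ^ 2 = len ^ 2 + D ^ 2)
    (hD : |D| ≤ m * len)
    (hx0 : 0 < x) (hxy : x < y) (hy : y < len)
    (hd1 : |d1| ≤ m * x) (hd2B : |D - d2| ≤ m * (len - y)) (hd12 : |d2 - d1| ≤ m * (y - x))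
    (E1 : x * len + d1 * D = (L - L ^ 2) * L / 2)
    (E2 : y * len + d2 * D = (L + L ^ 2) * L / 2) :
    x ≤ 33 / 62 * len ∧ len - y ≤ 33 / 62 * len ∧ y - x ≤ 10 / 9 * len ^ 2 := by
  have hD2 : D ^ 2 ≤ m ^ 2 * len ^ 2 := by
    have := pow_le_pow_left₀ (abs_nonneg D) hD 2
    rw [sq_abs] at this; nlinarith
  have hL2' : L ^ 2 ≤ (1 + m ^ 2) * len ^ 2 := by nlinarith
  have hLle : L ≤ (1 + m ^ 2) * len := by
    have h1 : L ^ 2 ≤ ((1 + m ^ 2) * len) ^ 2 := by nlinarith [sq_nonneg m, sq_nonneg len]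
    exact (pow_le_pow_iff_left₀ hL0 (by positivity) two_ne_zero).1 h1
  have hmx : x * m ^ 2 ≤ x * (1/32) := mul_le_mul_of_nonneg_left hm2 hx0.le
  have hmlen : len * m ^ 2 ≤ len * (1/32) := mul_le_mul_of_nonneg_left hm2 hlen.le
  have habs1 : |d1 * D| ≤ m * x * (m * len) := by
    rw [abs_mul]; exact mul_le_mul hd1 hD (abs_nonneg _) (mul_nonneg hm hx0.le)
  have key1 : x * (1 - m ^ 2) * len ≤ ((1 + m ^ 2) * len / 2) * len := by
    nlinarith [neg_abs_le (d1 * D), sq_nonneg L, mul_pos hlen hlen]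
  have h1 : x ≤ 33 / 62 * len := by
    have := le_of_mul_le_mul_right key1 hlen
    linarith
  have habs2 : |(D - d2) * D| ≤ m * (len - y) * (m * len) := by
    rw [abs_mul]; exact mul_le_mul hd2B hD (abs_nonneg _) (mul_nonneg hm (by linarith))
  have hE2' : (len - y) * len + (D - d2) * D = (L - L ^ 2) * L / 2 := by
    linear_combination -hL2 - E2
  have key2 : (len - y) * (1 - m ^ 2) * len ≤ ((1 + m ^ 2) * len / 2) * len := by
    nlinarith [neg_abs_le ((D - d2) * D), sq_nonneg L]
  have h2 : len - y ≤ 33 / 62 * len := by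
    have := le_of_mul_le_mul_right key2 hlen
    linarith [mul_le_mul_of_nonneg_left hm2 (by linarith : (0:ℝ) ≤ len - y)]
  have habs3 : |(d2 - d1) * D| ≤ m * (y - x) * (m * len) := by
    rw [abs_mul]; exact mul_le_mul hd12 hD (abs_nonneg _) (mul_nonneg hm (by linarith))
  have hE3 : (y - x) * len + (d2 - d1) * D = L ^ 2 * L := by
    linear_combination E2 - E1
  have hL3 : L ^ 2 * L ≤ (1 + m ^ 2) ^ 2 * len ^ 3 := by
    calc L ^ 2 * L ≤ ((1 + m ^ 2) * len ^ 2) * ((1 + m ^ 2) * len) :=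
          mul_le_mul hL2' hLle hL0 (by positivity)
      _ = (1 + m ^ 2) ^ 2 * len ^ 3 := by ring
  have hm4 : m ^ 2 * m ^ 2 ≤ (1/32) * (1/32) :=
    mul_le_mul hm2 hm2 (sq_nonneg m) (by norm_num)
  have hcoef : (1 + m ^ 2) ^ 2 ≤ 10 / 9 * (1 - m ^ 2) := by nlinarith [sq_nonneg m]
  have hc : 0 < (1 - m ^ 2) * len := by nlinarith
  have key3 : (y - x) * ((1 - m ^ 2) * len) ≤ (10 / 9 * len ^ 2) * ((1 - m ^ 2) * len) := by
    have step : (y - x) * ((1 - m ^ 2) * len) ≤ (1 + m ^ 2) ^ 2 * len ^ 3 := by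
      nlinarith [neg_abs_le ((d2 - d1) * D)]
    have step2 : (1 + m ^ 2) ^ 2 * len ^ 3 ≤ (10 / 9 * (1 - m ^ 2)) * len ^ 3 :=
      mul_le_mul_of_nonneg_right hcoef (by positivity)
    calc (y - x) * ((1 - m ^ 2) * len) ≤ (1 + m ^ 2) ^ 2 * len ^ 3 := step
      _ ≤ (10 / 9 * (1 - m ^ 2)) * len ^ 3 := step2
      _ = (10 / 9 * len ^ 2) * ((1 - m ^ 2) * len) := by ring
  exact ⟨h1, h2, le_of_mul_le_mul_right key3 hc⟩

end Aux


/-- The Euclidean plane. -/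
abbrev E2 : Type := EuclideanSpace ℝ (Fin 2)

/-- The graph map `t ↦ (t, f t)` into the Euclidean plane. -/
def graphMap (f : ℝ → ℝ) (t : ℝ) : E2 :=
  (EuclideanSpace.equiv (Fin 2) ℝ).symm ![t, f t]

set_option maxHeartbeats 2000000 in
/-- the Cantor-type set `K = ⋂_N closure(K_N)` built on a strictly
concave `C²` arc (the graph of `f` over `[0,η]`, chord on the x-axis) satisfying the
smallness hypotheses has positive one-dimensional Hausdorff measure.

The generation-`N` arcs are the graphs of `f` over `[a N k, b N k]`, `k < 2^N`; each
arc with chord from `A = (a,f a)` to `B = (b,f b)` of length `ℓ` produces two children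
keeping the endpoints `A`, `B`, the two new endpoints being the points of the arc lying
on the lines orthogonal to the chord through the two points of the chord at distance
`(ℓ−ℓ²)/2` and `(ℓ+ℓ²)/2` from `A` (i.e. the endpoints of the removed centered
sub-chord of length `ℓ²`). -/
theorem stmt13 (η : ℝ) (f : ℝ → ℝ) (M1 M2 : ℝ)
    (hη0 : 0 < η) (hf : ContDiff ℝ 2 f)
    (hf0 : f 0 = 0) (hfη : f η = 0)
    (hfpos : ∀ x ∈ Ioo (0:ℝ) η, 0 < f x)
    (hconc : ∀ x ∈ Icc (0:ℝ) η, deriv (deriv f) x < 0)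
    (hM1 : M1 = sSup ((fun x => |deriv f x|) '' Icc (0:ℝ) η))
    (hM2 : M2 = sSup ((fun x => |deriv (deriv f) x|) '' Icc (0:ℝ) η))
    (hsmall : η < min (1 / 2) (min (1 / (16 * M2 ^ 2)) (1 / (2 * M1 * M2))))
    (hdiam : 1 + 4 * M2 ^ 2 *
        diam {p : E2 | 0 ≤ p 0 ∧ p 0 ≤ η ∧ 0 ≤ p 1 ∧ p 1 ≤ f (p 0)} < 16 / 9)
    (a b : ℕ → ℕ → ℝ)
    (ha00 : a 0 0 = 0) (hb00 : b 0 0 = η)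
    (horder : ∀ N : ℕ, ∀ k < 2 ^ N, a N k < b N k)
    (hleft : ∀ N : ℕ, ∀ k < 2 ^ N, a (N + 1) (2 * k) = a N k)
    (hright : ∀ N : ℕ, ∀ k < 2 ^ N, b (N + 1) (2 * k + 1) = b N k)
    (hgap : ∀ N : ℕ, ∀ k < 2 ^ N, b (N + 1) (2 * k) < a (N + 1) (2 * k + 1))
    (hproj₁ : ∀ N : ℕ, ∀ k < 2 ^ N,
      a N k < b (N + 1) (2 * k) ∧
      ⟪graphMap f (b (N + 1) (2 * k)) -
          (graphMap f (a N k) +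
            ((dist (graphMap f (a N k)) (graphMap f (b N k)) -
              dist (graphMap f (a N k)) (graphMap f (b N k)) ^ 2) / 2 /
              dist (graphMap f (a N k)) (graphMap f (b N k))) •
            (graphMap f (b N k) - graphMap f (a N k))),
        graphMap f (b N k) - graphMap f (a N k)⟫ = 0)
    (hproj₂ : ∀ N : ℕ, ∀ k < 2 ^ N,
      a (N + 1) (2 * k + 1) < b N k ∧
      ⟪graphMap f (a (N + 1) (2 * k + 1)) -
          (graphMap f (a N k) +
            ((dist (graphMap f (a N k)) (graphMap f (b N k)) +
              dist (graphMap f (a N k)) (graphMap f (b N k)) ^ 2) / 2 /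
              dist (graphMap f (a N k)) (graphMap f (b N k))) •
            (graphMap f (b N k) - graphMap f (a N k))),
        graphMap f (b N k) - graphMap f (a N k)⟫ = 0) :
    0 < μH[1] (⋂ N : ℕ, closure
      (⋃ k ∈ Finset.range (2 ^ N), graphMap f '' Icc (a N k) (b N k))) := by
  -- coordinates and inner products
  have hg0 : ∀ t : ℝ, graphMap f t 0 = t := fun t => rfl
  have hinner : ∀ u v s t : ℝ,
      ⟪graphMap f u - graphMap f v, graphMap f s - graphMap f t⟫ =
        (u - v) * (s - t) + (f u - f v) * (f s - f t) := by
    intro u v s t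
    simp [PiLp.inner_apply, Fin.sum_univ_two, graphMap, RCLike.inner_apply]
    ring
  have hdist2 : ∀ u v : ℝ,
      dist (graphMap f u) (graphMap f v) ^ 2 = (u - v) ^ 2 + (f u - f v) ^ 2 := by
    intro u v
    rw [dist_eq_norm, ← real_inner_self_eq_norm_sq]
    rw [hinner]
    ring
  -- regularity
  have hf2 : ContDiff ℝ (1 + 1 : ℕ) f := by exact_mod_cast hf
  rw [show ((1 + 1 : ℕ) : WithTop ℕ∞) = (1 : WithTop ℕ∞) + 1 by norm_cast] at hf2
  rw [contDiff_succ_iff_deriv] at hf2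
  obtain ⟨hdf, -, hdf1⟩ := hf2
  rw [contDiff_one_iff_deriv] at hdf1
  obtain ⟨hdf', hcont2⟩ := hdf1
  have hcont1 : Continuous (deriv f) := hdf'.continuous
  -- sup bounds
  have hIcc : (0 : ℝ) ∈ Icc (0:ℝ) η := ⟨le_refl _, hη0.le⟩
  have bdd1 : BddAbove ((fun x => |deriv f x|) '' Icc (0:ℝ) η) :=
    (isCompact_Icc.image (continuous_abs.comp hcont1)).bddAbove
  have bdd2 : BddAbove ((fun x => |deriv (deriv f) x|) '' Icc (0:ℝ) η) :=
    (isCompact_Icc.image (continuous_abs.comp hcont2)).bddAbove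
  have hM1mem : ∀ x ∈ Icc (0:ℝ) η, |deriv f x| ≤ M1 := by
    intro x hx; rw [hM1]; exact le_csSup bdd1 (mem_image_of_mem _ hx)
  have hM2mem : ∀ x ∈ Icc (0:ℝ) η, |deriv (deriv f) x| ≤ M2 := by
    intro x hx; rw [hM2]; exact le_csSup bdd2 (mem_image_of_mem _ hx)
  have hM1nn : 0 ≤ M1 := le_trans (abs_nonneg _) (hM1mem 0 hIcc)
  have hM2pos : 0 < M2 := lt_of_lt_of_le (abs_pos.2 (hconc 0 hIcc).ne) (hM2mem 0 hIcc)
  have hη2 : η < 1 / 2 := lt_of_lt_of_le hsmall (min_le_left _ _)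
  have hη16 : η < 1 / (16 * M2 ^ 2) :=
    lt_of_lt_of_le hsmall (le_trans (min_le_right _ _) (min_le_left _ _))
  -- Lipschitz bounds
  have hlipf' : ∀ x ∈ Icc (0:ℝ) η, ∀ y ∈ Icc (0:ℝ) η,
      |deriv f x - deriv f y| ≤ M2 * |x - y| := by
    intro x hx y hy
    have := (convex_Icc (0:ℝ) η).norm_image_sub_le_of_norm_deriv_le
      (fun z _ => hdf'.differentiableAt) (fun z hz => by
        rw [Real.norm_eq_abs]; exact hM2mem z hz) hy hx
    simpa [Real.norm_eq_abs] using this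
  have hlipf : ∀ x ∈ Icc (0:ℝ) η, ∀ y ∈ Icc (0:ℝ) η, |f x - f y| ≤ M1 * |x - y| := by
    intro x hx y hy
    have := (convex_Icc (0:ℝ) η).norm_image_sub_le_of_norm_deriv_le
      (fun z _ => hdf.differentiableAt) (fun z hz => by
        rw [Real.norm_eq_abs]; exact hM1mem z hz) hy hx
    simpa [Real.norm_eq_abs] using this
  -- Rolle and M1 ≤ M2 η
  obtain ⟨c, hc, hc0⟩ := exists_deriv_eq_zero hη0 hdf.continuous.continuousOn
    (hf0.trans hfη.symm)
  have hcmem : c ∈ Icc (0:ℝ) η := Ioo_subset_Icc_self hc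
  have hM1le : M1 ≤ M2 * η := by
    rw [hM1]
    apply Real.sSup_le _ (by positivity)
    rintro y ⟨x, hx, rfl⟩
    calc |deriv f x| = |deriv f x - deriv f c| := by rw [hc0, sub_zero]
      _ ≤ M2 * |x - c| := hlipf' x hx c hcmem
      _ ≤ M2 * η := by
          apply mul_le_mul_of_nonneg_left _ hM2pos.le
          rw [abs_le]
          constructor <;> [linarith [hx.1, hcmem.2]; linarith [hx.2, hcmem.1]]
  have hm2 : M1 ^ 2 ≤ 1 / 32 := by
    have h1 : 16 * M2 ^ 2 * η < 1 := by
      have h16 : (0:ℝ) < 16 * M2 ^ 2 := by positivity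
      rw [lt_div_iff₀ h16] at hη16; linarith
    have h2 : M1 ^ 2 ≤ (M2 * η) ^ 2 := by nlinarith
    have h3 : M2 ^ 2 * η < 1 / 16 := by linarith
    have h4 := mul_lt_mul_of_pos_right h3 hη0
    nlinarith
  -- structural facts
  have hparent : ∀ N : ℕ, ∀ k < 2 ^ N,
      a N k < b (N+1) (2*k) ∧ b (N+1) (2*k) < a (N+1) (2*k+1) ∧ a (N+1) (2*k+1) < b N k :=
    fun N k hk => ⟨(hproj₁ N k hk).1, hgap N k hk, (hproj₂ N k hk).1⟩
  have hmem : ∀ N : ℕ, ∀ k < 2 ^ N, 0 ≤ a N k ∧ b N k ≤ η := by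
    intro N
    induction N with
    | zero =>
      intro k hk
      interval_cases k
      constructor
      · rw [ha00]
      · rw [hb00]
    | succ N ih =>
      intro k hk
      have hp : (2:ℕ) ^ (N+1) = 2 * 2 ^ N := by rw [pow_succ]; ring
      rcases Nat.even_or_odd k with ⟨j, hj⟩ | ⟨j, hj⟩
      · have hjlt : j < 2 ^ N := by omega
        have h1 := ih j hjlt
        have h2j1 : 2*j+1 < 2 ^ (N+1) := by omega
        have hkk : k = 2*j := by omega
        constructor
        · rw [hkk, hleft N j hjlt]; exact h1.1
        · rw [hkk]
          calc b (N+1) (2*j) ≤ a (N+1) (2*j+1) := (hgap N j hjlt).le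
            _ ≤ b (N+1) (2*j+1) := (horder (N+1) _ h2j1).le
            _ = b N j := hright N j hjlt
            _ ≤ η := h1.2
      · have hjlt : j < 2 ^ N := by omega
        have h1 := ih j hjlt
        have h2j : 2*j < 2 ^ (N+1) := by omega
        constructor
        · rw [hj]
          calc (0:ℝ) ≤ a N j := h1.1
            _ = a (N+1) (2*j) := (hleft N j hjlt).symm
            _ ≤ b (N+1) (2*j) := (horder (N+1) _ h2j).le
            _ ≤ a (N+1) (2*j+1) := (hgap N j hjlt).le
        · rw [hj, hright N j hjlt]; exact h1.2
  -- key geometric estimates for each node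
  have hkey : ∀ N : ℕ, ∀ k < 2 ^ N,
      b (N+1) (2*k) - a (N+1) (2*k) ≤ 33/62 * (b N k - a N k) ∧
      b (N+1) (2*k+1) - a (N+1) (2*k+1) ≤ 33/62 * (b N k - a N k) ∧
      a (N+1) (2*k+1) - b (N+1) (2*k) ≤ 10/9 * (b N k - a N k) ^ 2 := by
    intro N k hk
    obtain ⟨hO1, hO2, hO3⟩ := hparent N k hk
    obtain ⟨h0a, hbη⟩ := hmem N k hk
    have hab := horder N k hk
    set A := a N k with hA
    set B := b N k with hB
    set q1 := b (N+1) (2*k) with hq1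
    set q2 := a (N+1) (2*k+1) with hq2
    have hAm : A ∈ Icc (0:ℝ) η := ⟨h0a, le_trans hab.le hbη⟩
    have hBm : B ∈ Icc (0:ℝ) η := ⟨le_trans h0a hab.le, hbη⟩
    have hq1m : q1 ∈ Icc (0:ℝ) η :=
      ⟨le_trans h0a hO1.le, le_trans (le_trans hO2.le hO3.le) hbη⟩
    have hq2m : q2 ∈ Icc (0:ℝ) η :=
      ⟨le_trans h0a (lt_trans hO1 hO2).le, le_trans hO3.le hbη⟩
    set L := dist (graphMap f A) (graphMap f B) with hL
    have hL0 : 0 ≤ L := dist_nonneg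
    have hL2 : L ^ 2 = (B - A) ^ 2 + (f B - f A) ^ 2 := by
      rw [hL, hdist2]; ring
    have hLpos : 0 < L := by nlinarith [sq_nonneg (f B - f A)]
    have hself : ⟪graphMap f B - graphMap f A, graphMap f B - graphMap f A⟫ = L ^ 2 := by
      rw [real_inner_self_eq_norm_sq, ← dist_eq_norm, dist_comm]
    have expand : ∀ (P : E2) (t : ℝ),
        ⟪P - (graphMap f A + t • (graphMap f B - graphMap f A)),
          graphMap f B - graphMap f A⟫ =
        ⟪P - graphMap f A, graphMap f B - graphMap f A⟫ - t * L ^ 2 := by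
      intro P t
      rw [show P - (graphMap f A + t • (graphMap f B - graphMap f A)) =
        (P - graphMap f A) - t • (graphMap f B - graphMap f A) by module]
      rw [inner_sub_left, real_inner_smul_left, hself]
    have hcoefeq1 : ((L - L^2)/2/L) * L^2 = (L - L^2) * L / 2 := by
      field_simp
    have hcoefeq2 : ((L + L^2)/2/L) * L^2 = (L + L^2) * L / 2 := by
      field_simp
    have e1 := (hproj₁ N k hk).2
    rw [expand, hinner] at e1
    have E1 : (q1 - A) * (B - A) + (f q1 - f A) * (f B - f A) = (L - L ^ 2) * L / 2 := by
      rw [← hcoefeq1]; linarith [e1]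
    have e2 := (hproj₂ N k hk).2
    rw [expand, hinner] at e2
    have E2 : (q2 - A) * (B - A) + (f q2 - f A) * (f B - f A) = (L + L ^ 2) * L / 2 := by
      rw [← hcoefeq2]; linarith [e2]
    have hDb : |f B - f A| ≤ M1 * (B - A) := by
      have h := hlipf B hBm A hAm
      rwa [abs_of_pos (by linarith : (0:ℝ) < B - A)] at h
    have hd1 : |f q1 - f A| ≤ M1 * (q1 - A) := by
      have h := hlipf q1 hq1m A hAm
      rwa [abs_of_pos (by linarith : (0:ℝ) < q1 - A)] at h
    have hd2B : |(f B - f A) - (f q2 - f A)| ≤ M1 * ((B - A) - (q2 - A)) := by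
      have h := hlipf B hBm q2 hq2m
      rw [abs_of_pos (by linarith : (0:ℝ) < B - q2)] at h
      calc |(f B - f A) - (f q2 - f A)| = |f B - f q2| := by congr 1; ring
        _ ≤ M1 * (B - q2) := h
        _ = M1 * ((B - A) - (q2 - A)) := by ring
    have hd12 : |(f q2 - f A) - (f q1 - f A)| ≤ M1 * ((q2 - A) - (q1 - A)) := by
      have h := hlipf q2 hq2m q1 hq1m
      rw [abs_of_pos (by linarith : (0:ℝ) < q2 - q1)] at h
      calc |(f q2 - f A) - (f q1 - f A)| = |f q2 - f q1| := by congr 1; ring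
        _ ≤ M1 * (q2 - q1) := h
        _ = M1 * ((q2 - A) - (q1 - A)) := by ring
    obtain ⟨c1, c2, c3⟩ := node_est (B - A) (f B - f A) L (q1 - A) (q2 - A)
      (f q1 - f A) (f q2 - f A) M1
      (by linarith) hM1nn hm2 hL0 hL2 hDb
      (by linarith) (by linarith) (by linarith)
      hd1 hd2B hd12 E1 E2
    refine ⟨?_, ?_, ?_⟩
    · rw [hleft N k hk]; linarith
    · rw [hright N k hk]; linarith
    · linarith
  -- maximal length at generation N
  have hlenpos : ∀ N : ℕ, ∀ k < 2 ^ N, 0 < b N k - a N k :=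
    fun N k hk => sub_pos.2 (horder N k hk)
  have hlenmax : ∀ N : ℕ, ∀ k < 2 ^ N, b N k - a N k ≤ η * (33/62) ^ N := by
    intro N
    induction N with
    | zero =>
      intro k hk; interval_cases k; rw [ha00, hb00]; simp
    | succ N ih =>
      intro k hk
      have hp : (2:ℕ) ^ (N+1) = 2 * 2 ^ N := by rw [pow_succ]; ring
      have step : ∀ j < 2 ^ N, ∀ k', (k' = 2*j ∨ k' = 2*j+1) →
          b (N+1) k' - a (N+1) k' ≤ η * (33/62) ^ (N+1) := by
        intro j hj k' hk'
        have h1 := hkey N j hj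
        have h2 := ih j hj
        have h3 : 33/62 * (b N j - a N j) ≤ 33/62 * (η * (33/62) ^ N) := by linarith
        have h4 : 33/62 * (η * (33/62) ^ N) = η * (33/62) ^ (N+1) := by ring
        rcases hk' with rfl | rfl
        · linarith [h1.1]
        · linarith [h1.2.1]
      rcases Nat.even_or_odd k with ⟨j, hj⟩ | ⟨j, hj⟩
      · exact step j (by omega) k (Or.inl (by omega))
      · exact step j (by omega) k (Or.inr (by omega))
  -- total lengths
  set T : ℕ → ℝ := fun N => ∑ k ∈ Finset.range (2 ^ N), (b N k - a N k) with hT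
  set c : ℝ := 10/9 * η with hcdef
  have hc0 : 0 ≤ c := by rw [hcdef]; positivity
  have hc59 : c < 5/9 := by rw [hcdef]; linarith
  have hRN : ∀ N : ℕ, 0 ≤ (33/62:ℝ) ^ N ∧ (33/62:ℝ) ^ N ≤ 1 :=
    fun N => ⟨by positivity, pow_le_one₀ (by norm_num) (by norm_num)⟩
  have hcR : ∀ N : ℕ, 0 ≤ c * (33/62:ℝ) ^ N ∧ c * (33/62:ℝ) ^ N ≤ 5/9 := by
    intro N
    constructor
    · exact mul_nonneg hc0 (hRN N).1
    · calc c * (33/62:ℝ) ^ N ≤ c * 1 := mul_le_mul_of_nonneg_left (hRN N).2 hc0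
        _ ≤ 5/9 := by linarith
  have hTstep : ∀ N : ℕ, (1 - c * (33/62) ^ N) * T N ≤ T (N+1) := by
    intro N
    have hp : (2:ℕ) ^ (N+1) = 2 * 2 ^ N := by rw [pow_succ]; ring
    have hT1 : T (N+1) = ∑ k ∈ Finset.range (2 ^ N),
        ((b (N+1) (2*k) - a (N+1) (2*k)) + (b (N+1) (2*k+1) - a (N+1) (2*k+1))) := by
      rw [hT]
      simp only []
      rw [hp, sum_range_two_mul']
    rw [hT1, hT]
    simp only []
    rw [Finset.mul_sum]
    apply Finset.sum_le_sum
    intro k hk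
    have hklt : k < 2 ^ N := Finset.mem_range.1 hk
    have h1 := (hkey N k hklt).2.2
    have h2 := hlenmax N k hklt
    have h3 := hlenpos N k hklt
    have hsum : (b (N+1) (2*k) - a (N+1) (2*k)) + (b (N+1) (2*k+1) - a (N+1) (2*k+1)) =
        (b N k - a N k) - (a (N+1) (2*k+1) - b (N+1) (2*k)) := by
      rw [hleft N k hklt, hright N k hklt]; ring
    rw [hsum]
    have h4 : a (N+1) (2*k+1) - b (N+1) (2*k) ≤ c * (33/62) ^ N * (b N k - a N k) := by
      have h5 : (b N k - a N k) ^ 2 ≤ (η * (33/62) ^ N) * (b N k - a N k) := by nlinarith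
      calc a (N+1) (2*k+1) - b (N+1) (2*k) ≤ 10/9 * (b N k - a N k) ^ 2 := h1
        _ ≤ 10/9 * ((η * (33/62) ^ N) * (b N k - a N k)) := by linarith
        _ = c * (33/62) ^ N * (b N k - a N k) := by rw [hcdef]; ring
    nlinarith
  have hqlb : ∀ N : ℕ, η * ∏ j ∈ Finset.range N, (1 - c * (33/62) ^ j) ≤ T N := by
    intro N
    induction N with
    | zero =>
      rw [hT]; simp [ha00, hb00]
    | succ N ih =>
      rw [Finset.prod_range_succ]
      have hfac : 0 ≤ 1 - c * (33/62) ^ N := by linarith [(hcR N).2]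
      have hprodnn : 0 ≤ ∏ j ∈ Finset.range N, (1 - c * (33/62:ℝ) ^ j) :=
        Finset.prod_nonneg fun j _ => by linarith [(hcR j).2]
      calc η * ((∏ j ∈ Finset.range N, (1 - c * (33/62) ^ j)) * (1 - c * (33/62) ^ N))
          = (η * ∏ j ∈ Finset.range N, (1 - c * (33/62) ^ j)) * (1 - c * (33/62) ^ N) := by
            ring
        _ ≤ T N * (1 - c * (33/62) ^ N) := mul_le_mul_of_nonneg_right ih hfac
        _ = (1 - c * (33/62) ^ N) * T N := by ring
        _ ≤ T (N+1) := hTstep N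
  have hεprod : ∀ N : ℕ, (1 - c) * (1 - 33/29 * c) ≤
      ∏ j ∈ Finset.range N, (1 - c * (33/62) ^ j) := by
    intro N
    cases N with
    | zero =>
      simp only [Finset.range_zero, Finset.prod_empty]
      nlinarith
    | succ n =>
      rw [Finset.prod_range_succ']
      have h1 : ∀ j : ℕ, 0 ≤ c * (33/62:ℝ) ^ (j+1) := fun j => (hcR (j+1)).1
      have h2 : ∀ j : ℕ, c * (33/62:ℝ) ^ (j+1) ≤ 1 := fun j => by linarith [(hcR (j+1)).2]
      have h3 := prod_one_sub_ge' n (fun j => c * (33/62:ℝ) ^ (j+1)) h1 h2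
      have h4 : ∑ j ∈ Finset.range n, c * (33/62:ℝ) ^ (j+1) ≤ 33/29 * c := by
        have h5 : ∑ j ∈ Finset.range n, c * (33/62:ℝ) ^ (j+1) =
            c * (33/62) * ∑ j ∈ Finset.range n, (33/62:ℝ) ^ j := by
          rw [Finset.mul_sum]; apply Finset.sum_congr rfl; intro j _; ring
        rw [h5]
        have h6 := geom_sum_le_div' (33/62) (by norm_num) (by norm_num) n
        have h7 : (1:ℝ) / (1 - 33/62) = 62/29 := by norm_num
        rw [h7] at h6
        calc c * (33/62) * ∑ j ∈ Finset.range n, (33/62:ℝ) ^ j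
            ≤ c * (33/62) * (62/29) := by
              apply mul_le_mul_of_nonneg_left h6 (by positivity)
          _ = 33/29 * c := by ring
      have h8 : 1 - 33/29 * c ≤ ∏ j ∈ Finset.range n, (1 - c * (33/62:ℝ) ^ (j+1)) := by
        linarith
      simp only [pow_zero, mul_one]
      calc (1 - c) * (1 - 33/29 * c)
          = (1 - 33/29 * c) * (1 - c) := by ring
        _ ≤ (∏ j ∈ Finset.range n, (1 - c * (33/62:ℝ) ^ (j+1))) * (1 - c) :=
            mul_le_mul_of_nonneg_right h8 (by linarith)
  have hεpos : 0 < (1 - c) * (1 - 33/29 * c) :=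
    mul_pos (by linarith) (by linarith)
  have hTlb : ∀ N : ℕ, η * ((1 - c) * (1 - 33/29 * c)) ≤ T N := by
    intro N
    calc η * ((1 - c) * (1 - 33/29 * c))
        ≤ η * ∏ j ∈ Finset.range N, (1 - c * (33/62) ^ j) :=
          mul_le_mul_of_nonneg_left (hεprod N) hη0.le
      _ ≤ T N := hqlb N
  -- ordering of the intervals at a given generation
  have hadj : ∀ N : ℕ, ∀ k : ℕ, k + 1 < 2 ^ N → b N k < a N (k+1) := by
    intro N
    induction N with
    | zero => intro k hk; omega
    | succ N ih =>
      intro k hk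
      have hp : (2:ℕ) ^ (N+1) = 2 * 2 ^ N := by rw [pow_succ]; ring
      rcases Nat.even_or_odd k with ⟨j, hj⟩ | ⟨j, hj⟩
      · have hjlt : j < 2 ^ N := by omega
        have hkk : k = 2*j := by omega
        rw [hkk]
        exact hgap N j hjlt
      · have hjlt : j + 1 < 2 ^ N := by omega
        have hkk : k = 2*j+1 := hj
        have hk1 : k + 1 = 2*(j+1) := by omega
        have hbk : b (N+1) k = b N j := by rw [hkk]; exact hright N j (by omega)
        have hak : a (N+1) (k+1) = a N (j+1) := by rw [hk1]; exact hleft N (j+1) hjlt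
        rw [hbk, hak]
        exact ih j hjlt
  have hord : ∀ N : ℕ, ∀ i j : ℕ, i < j → j < 2 ^ N → b N i < a N j := by
    intro N i j hij hj
    induction j, hij using Nat.le_induction with
    | base => exact hadj N i hj
    | succ j hij ih =>
      have hjlt : j < 2 ^ N := by omega
      calc b N i < a N j := ih hjlt
        _ < b N j := horder N j hjlt
        _ < a N (j+1) := hadj N j hj
  -- the projected Cantor sets
  set U : ℕ → Set ℝ := fun N => ⋃ k ∈ Finset.range (2 ^ N), Icc (a N k) (b N k) with hU
  have hmeasU : ∀ N, MeasurableSet (U N) := by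
    intro N
    exact (Finset.range (2 ^ N)).measurableSet_biUnion fun k _ => measurableSet_Icc
  have hdisjU : ∀ N : ℕ, Set.PairwiseDisjoint (↑(Finset.range (2 ^ N)))
      (fun k => Icc (a N k) (b N k)) := by
    intro N i hi j hj hij
    simp only [Finset.coe_range, mem_Iio] at hi hj
    rcases lt_or_gt_of_ne hij with h | h
    · have := hord N i j h hj
      exact Set.disjoint_left.mpr fun x hx1 hx2 => absurd (lt_of_le_of_lt hx1.2 this)
        (not_lt.2 hx2.1)
    · have := hord N j i h hi
      exact Set.disjoint_left.mpr fun x hx1 hx2 => absurd (lt_of_le_of_lt hx2.2 this)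
        (not_lt.2 hx1.1)
  have hvolU : ∀ N : ℕ, ENNReal.ofReal (T N) ≤ volume (U N) := by
    intro N
    rw [hU]
    rw [measure_biUnion_finset (hdisjU N) fun k _ => measurableSet_Icc]
    have : ∀ k ∈ Finset.range (2 ^ N), volume (Icc (a N k) (b N k)) =
        ENNReal.ofReal (b N k - a N k) := fun k _ => Real.volume_Icc
    rw [Finset.sum_congr rfl this, hT]
    rw [ENNReal.ofReal_sum_of_nonneg fun k hk => (hlenpos N k (Finset.mem_range.1 hk)).le]
  have hUsub : ∀ N : ℕ, U (N+1) ⊆ U N := by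
    intro N x hx
    rw [hU, mem_iUnion₂] at hx ⊢
    obtain ⟨k, hk, hxk⟩ := hx
    have hklt : k < 2 ^ (N+1) := Finset.mem_range.1 hk
    have hp : (2:ℕ) ^ (N+1) = 2 * 2 ^ N := by rw [pow_succ]; ring
    rcases Nat.even_or_odd k with ⟨j, hj⟩ | ⟨j, hj⟩
    · have hjlt : j < 2 ^ N := by omega
      have hkk : k = 2*j := by omega
      rw [hkk] at hxk
      refine ⟨j, Finset.mem_range.2 hjlt, ?_, ?_⟩
      · rw [← hleft N j hjlt]; exact hxk.1
      · calc x ≤ b (N+1) (2*j) := hxk.2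
          _ ≤ a (N+1) (2*j+1) := (hgap N j hjlt).le
          _ ≤ b N j := (hproj₂ N j hjlt).1.le
    · have hjlt : j < 2 ^ N := by omega
      rw [hj] at hxk
      refine ⟨j, Finset.mem_range.2 hjlt, ?_, ?_⟩
      · calc a N j ≤ b (N+1) (2*j) := ((hproj₁ N j hjlt).1).le
          _ ≤ a (N+1) (2*j+1) := (hgap N j hjlt).le
          _ ≤ x := hxk.1
      · rw [← hright N j hjlt]; exact hxk.2
  have hanti : Antitone U := antitone_nat_of_succ_le hUsub
  have hfinU : volume (U 0) ≠ ⊤ := by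
    have hU0 : U 0 = Icc (a 0 0) (b 0 0) := by rw [hU]; norm_num
    rw [hU0, Real.volume_Icc]
    exact ENNReal.ofReal_ne_top
  have htend := tendsto_measure_iInter_atTop (fun N => (hmeasU N).nullMeasurableSet)
    hanti ⟨0, hfinU⟩
  have hPvol : ENNReal.ofReal (η * ((1 - c) * (1 - 33/29 * c))) ≤ volume (⋂ N, U N) := by
    apply ge_of_tendsto' htend
    intro N
    calc ENNReal.ofReal (η * ((1 - c) * (1 - 33/29 * c)))
        ≤ ENNReal.ofReal (T N) := ENNReal.ofReal_le_ofReal (hTlb N)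
      _ ≤ volume (U N) := hvolU N
  -- projection to the first coordinate
  have hπ : LipschitzWith 1 (fun p : E2 => p 0) := by
    apply LipschitzWith.of_dist_le_mul
    intro p q
    rw [NNReal.coe_one, one_mul, Real.dist_eq, EuclideanSpace.dist_eq,
      ← Real.sqrt_sq_eq_abs]
    apply Real.sqrt_le_sqrt
    have h1 : (p 0 - q 0) ^ 2 = dist (p 0) (q 0) ^ 2 := by
      rw [Real.dist_eq, sq_abs]
    rw [h1]
    exact Finset.single_le_sum (f := fun i => dist (p i) (q i) ^ 2)
      (fun i _ => sq_nonneg _) (Finset.mem_univ 0)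
  set K : Set E2 := (⋂ N : ℕ, closure
      (⋃ k ∈ Finset.range (2 ^ N), graphMap f '' Icc (a N k) (b N k))) with hK
  have hKsub : (⋂ N, U N) ⊆ (fun p : E2 => p 0) '' K := by
    intro x hx
    refine ⟨graphMap f x, ?_, hg0 x⟩
    rw [hK, mem_iInter]
    intro N
    apply subset_closure
    have hxN : x ∈ U N := (mem_iInter.1 hx) N
    rw [hU, mem_iUnion₂] at hxN
    obtain ⟨k, hk, hxk⟩ := hxN
    exact mem_iUnion₂.2 ⟨k, hk, mem_image_of_mem _ hxk⟩
  -- conclusion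
  have hfinal : (0:ℝ≥0∞) < μH[1] K := by
    have h1 : (0:ℝ≥0∞) < ENNReal.ofReal (η * ((1 - c) * (1 - 33/29 * c))) :=
      ENNReal.ofReal_pos.2 (mul_pos hη0 hεpos)
    have h2 : volume (⋂ N, U N) ≤ volume ((fun p : E2 => p 0) '' K) :=
      measure_mono hKsub
    have h3 : μH[1] ((fun p : E2 => p 0) '' K) ≤ (1:ℝ≥0) ^ (1:ℝ) * μH[1] K :=
      hπ.hausdorffMeasure_image_le zero_le_one K
    rw [MeasureTheory.hausdorffMeasure_real] at h3
    simp only [ENNReal.coe_one, ENNReal.one_rpow, one_mul, ENNReal.rpow_one, one_pow] at h3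
    calc (0:ℝ≥0∞) < ENNReal.ofReal (η * ((1 - c) * (1 - 33/29 * c))) := h1
      _ ≤ volume (⋂ N, U N) := hPvol
      _ ≤ volume ((fun p : E2 => p 0) '' K) := h2
      _ ≤ μH[1] K := h3
  exact hfinal
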